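/- Let θ₀ ∈ (0,1), n ≥ 2, 1 ≤ k ≤ n−1, and α = k/n. Then C(n,k)·θ₀^k·(1−θ₀)^{n−k} ≥ (8·α(1−α)·n)^{−1/2} · exp(−n·D(α‖θ₀)). -/

import Mathlib

private lemma bern3 (x : ℝ) (hx : 0 ≤ x) (r : ℕ) :
    1 + r*x + ((r:ℝ)*((r:ℝ)-1)/2)*x^2 + ((r:ℝ)*((r:ℝ)-1)*((r:ℝ)-2)/6)*x^3 ≤ (1+x)^r := by
  induction r with
  | zero => norm_num
  | succ r ih =>
    have hr : (0:ℝ) ≤ (r:ℝ)*((r:ℝ)-1)*((r:ℝ)-2) := by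
      rcases Nat.lt_or_ge r 2 with h | h
      · interval_cases r <;> norm_num
      · have h2 : (2:ℝ) ≤ (r:ℝ) := by exact_mod_cast h
        nlinarith [mul_nonneg (mul_nonneg (by linarith : (0:ℝ) ≤ (r:ℝ)) (by linarith : (0:ℝ) ≤ (r:ℝ)-1)) (by linarith : (0:ℝ) ≤ (r:ℝ)-2)]
    have hr1 : (0:ℝ) ≤ (r:ℝ)*((r:ℝ)-1) := by
      rcases Nat.lt_or_ge r 1 with h | h
      · interval_cases r <;> norm_num
      · have h2 : (1:ℝ) ≤ (r:ℝ) := by exact_mod_cast h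
        nlinarith [mul_nonneg (by linarith : (0:ℝ) ≤ (r:ℝ)) (by linarith : (0:ℝ) ≤ (r:ℝ)-1)]
    have h1x : (0:ℝ) ≤ 1 + x := by linarith
    have hmul := mul_le_mul_of_nonneg_right ih h1x
    have hpow : (1+x)^(r+1) = (1+x)^r * (1+x) := by ring
    push_cast
    rw [hpow]
    nlinarith [mul_nonneg hr (pow_nonneg hx 4), mul_nonneg hr1 (pow_nonneg hx 3),
      mul_nonneg (Nat.cast_nonneg (α := ℝ) r) (pow_nonneg hx 2)]

private lemma step1 (m : ℕ) (hm : 1 ≤ m) :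
    ((m:ℝ)^2+2*m)^(2*m+1) * ((m:ℝ)+2)^2 ≤ ((m:ℝ)+1)^(4*m+4) := by
  obtain ⟨j, rfl⟩ : ∃ j, m = j+1 := ⟨m-1, by omega⟩
  set J : ℝ := (j:ℝ) with hJ
  have hJ0 : 0 ≤ J := Nat.cast_nonneg j
  have he1 : 2*(j+1)+1 = 2*j+3 := by ring
  have he2 : 4*(j+1)+4 = 4*j+8 := by ring
  push_cast
  rw [he1, he2]
  set c : ℝ := (J+1)^2 + 2*(J+1) with hc
  have hc3 : (3:ℝ) ≤ c := by rw [hc]; nlinarith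
  have hc0 : (0:ℝ) < c := by linarith
  have hb := bern3 (1/c) (by positivity) (2*j+3)
  push_cast at hb
  have hb' : 1 + (2*J+3)*(1/c) + ((2*J+3)*(2*J+2)/2)*(1/c)^2
      + ((2*J+3)*(2*J+2)*(2*J+1)/6)*(1/c)^3 ≤ (1+1/c)^(2*j+3) :=
    le_trans (le_of_eq (by push_cast; ring)) hb
  have key : c^(2*j) * (c^3 + (2*J+3)*c^2 + ((2*J+3)*(2*J+2)/2)*c
      + (2*J+3)*(2*J+2)*(2*J+1)/6) ≤ (c+1)^(2*j+3) := by
    calc c^(2*j) * (c^3 + (2*J+3)*c^2 + ((2*J+3)*(2*J+2)/2)*c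
          + (2*J+3)*(2*J+2)*(2*J+1)/6)
        = c^(2*j+3) * (1 + (2*J+3)*(1/c) + ((2*J+3)*(2*J+2)/2)*(1/c)^2
          + ((2*J+3)*(2*J+2)*(2*J+1)/6)*(1/c)^3) := by
          field_simp
          ring
      _ ≤ c^(2*j+3) * (1+1/c)^(2*j+3) :=
          mul_le_mul_of_nonneg_left hb' (le_of_lt (pow_pos hc0 _))
      _ = (c+1)^(2*j+3) := by
          rw [← mul_pow]
          congr 1
          field_simp
  have hpoly : c^3 * ((J+1)+2)^2 ≤ (c+1) * (c^3 + (2*J+3)*c^2 + ((2*J+3)*(2*J+2)/2)*c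
      + (2*J+3)*(2*J+2)*(2*J+1)/6) := by
    rw [hc]
    nlinarith [mul_nonneg (mul_nonneg hJ0 hJ0) hJ0,
      mul_nonneg (mul_nonneg (mul_nonneg hJ0 hJ0) hJ0) hJ0,
      mul_nonneg (mul_nonneg (mul_nonneg (mul_nonneg hJ0 hJ0) hJ0) hJ0) hJ0]
  calc ((J+1)^2+2*(J+1))^(2*j+3) * ((J+1)+2)^2
      = c^(2*j) * (c^3 * ((J+1)+2)^2) := by rw [← hc]; ring
    _ ≤ c^(2*j) * ((c+1) * (c^3 + (2*J+3)*c^2 + ((2*J+3)*(2*J+2)/2)*c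
          + (2*J+3)*(2*J+2)*(2*J+1)/6)) :=
        mul_le_mul_of_nonneg_left hpoly (pow_nonneg (le_of_lt hc0) _)
    _ = (c^(2*j) * (c^3 + (2*J+3)*c^2 + ((2*J+3)*(2*J+2)/2)*c
          + (2*J+3)*(2*J+2)*(2*J+1)/6)) * (c+1) := by ring
    _ ≤ (c+1)^(2*j+3) * (c+1) := mul_le_mul_of_nonneg_right key (by linarith)
    _ = ((J+1)+1)^(4*j+8) := by
        rw [← pow_succ]
        have : c+1 = ((J+1)+1)^2 := by rw [hc]; ring
        rw [this, ← pow_mul]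
        congr 1
        omega

private lemma mono (m s : ℕ) (hm : 1 ≤ m) (hms : m ≤ s) :
    ((m:ℝ))^(2*m+1) * ((s:ℝ)+1)^(2*s+1) ≤ ((m:ℝ)+1)^(2*m+1) * (s:ℝ)^(2*s+1) := by
  induction s, hms using Nat.le_induction with
  | base => rw [mul_comm]
  | succ s hms ih =>
    have hs1 : 1 ≤ s := le_trans hm hms
    have hS0 : (0:ℝ) < (s:ℝ) := by exact_mod_cast hs1
    have hSp : (0:ℝ) < (s:ℝ)^(2*s+1) := pow_pos hS0 _
    -- step inequality: S^(2s+1)*(S+2)^(2s+3) ≤ (S+1)^(4s+4)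
    have hstep : (s:ℝ)^(2*s+1) * ((s:ℝ)+2)^(2*s+3) ≤ ((s:ℝ)+1)^(4*s+4) := by
      have h := step1 s hs1
      have hfac : ((s:ℝ)^2+2*s)^(2*s+1) = (s:ℝ)^(2*s+1) * ((s:ℝ)+2)^(2*s+1) := by
        rw [← mul_pow]; ring_nf
      rw [hfac] at h
      calc (s:ℝ)^(2*s+1) * ((s:ℝ)+2)^(2*s+3)
          = (s:ℝ)^(2*s+1) * ((s:ℝ)+2)^(2*s+1) * ((s:ℝ)+2)^2 := by
            rw [show 2*s+3 = (2*s+1)+2 by omega, pow_add]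
            ring
        _ ≤ ((s:ℝ)+1)^(4*s+4) := h
    -- goal: M^(2m+1)*((s+1)+1)^(2(s+1)+1) ≤ (M+1)^(2m+1)*(s+1)^(2(s+1)+1)
    have hexp : 2*(s+1)+1 = 2*s+3 := by ring
    push_cast
    rw [hexp]
    have h2 : ((s:ℝ)+1+1) = (s:ℝ)+2 := by ring
    rw [h2]
    have h1 : (m:ℝ)^(2*m+1) * ((s:ℝ)+2)^(2*s+3) * (s:ℝ)^(2*s+1)
        ≤ ((m:ℝ)+1)^(2*m+1) * ((s:ℝ)+1)^(2*s+3) * (s:ℝ)^(2*s+1) := by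
      calc (m:ℝ)^(2*m+1) * ((s:ℝ)+2)^(2*s+3) * (s:ℝ)^(2*s+1)
          = (m:ℝ)^(2*m+1) * ((s:ℝ)^(2*s+1) * ((s:ℝ)+2)^(2*s+3)) := by ring
        _ ≤ (m:ℝ)^(2*m+1) * ((s:ℝ)+1)^(4*s+4) :=
            mul_le_mul_of_nonneg_left hstep (pow_nonneg (Nat.cast_nonneg m) _)
        _ = ((m:ℝ)^(2*m+1) * ((s:ℝ)+1)^(2*s+1)) * ((s:ℝ)+1)^(2*s+3) := by
            rw [show 4*s+4 = (2*s+1)+(2*s+3) by omega, pow_add]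
            ring
        _ ≤ (((m:ℝ)+1)^(2*m+1) * (s:ℝ)^(2*s+1)) * ((s:ℝ)+1)^(2*s+3) :=
            mul_le_mul_of_nonneg_right ih (pow_nonneg (by positivity) _)
        _ = ((m:ℝ)+1)^(2*m+1) * ((s:ℝ)+1)^(2*s+3) * (s:ℝ)^(2*s+1) := by ring
    exact le_of_mul_le_mul_right h1 hSp

private lemma Qlem (k m : ℕ) (hk : 1 ≤ k) (hm : 1 ≤ m) :
    ((k+m:ℕ):ℝ)^(2*(k+m)+1)
      ≤ 8*(k:ℝ)*(m:ℝ)*(((k+m).choose k : ℕ):ℝ)^2 * (k:ℝ)^(2*k)*(m:ℝ)^(2*m) := by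
  have hK0 : (0:ℝ) < (k:ℝ) := by exact_mod_cast hk
  induction m, hm using Nat.le_induction with
  | base =>
    rw [Nat.choose_succ_self_right]
    push_cast
    have hmono := mono 1 k le_rfl hk
    norm_num at hmono
    -- hmono : (k+1)^(2k+1) ≤ 8 * k^(2k+1)  (roughly)
    rw [show 2*(k+1)+1 = (2*k+1)+2 from by omega, pow_add]
    calc ((k:ℝ)+1)^(2*k+1) * ((k:ℝ)+1)^2 ≤ 8*(k:ℝ)^(2*k+1) * ((k:ℝ)+1)^2 := by
          apply mul_le_mul_of_nonneg_right _ (by positivity)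
          linarith [hmono]
      _ = 8*(k:ℝ)*1*((k:ℝ)+1)^2*(k:ℝ)^(2*k)*(1:ℝ)^(2*1) := by
          rw [pow_succ]
          ring
  | succ m hm ih =>
    have hM0 : (0:ℝ) < (m:ℝ) := by exact_mod_cast hm
    set S : ℝ := (k:ℝ)+(m:ℝ) with hS
    set C : ℝ := (((k+m).choose k : ℕ):ℝ) with hC
    set C' : ℝ := (((k+m+1).choose k : ℕ):ℝ) with hC'
    have hC0 : (0:ℝ) ≤ C := Nat.cast_nonneg _
    -- choose identity
    have hCid : (m+1) * ((k+m+1).choose k) = (k+m+1) * ((k+m).choose k) := by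
      have h1 := Nat.add_one_mul_choose_eq (k+m) m
      have h2 : (k+m).choose (k+m-m) = (k+m).choose m := Nat.choose_symm (by omega)
      have h3 : (k+m+1).choose (k+m+1-(m+1)) = (k+m+1).choose (m+1) :=
        Nat.choose_symm (by omega)
      rw [show k+m-m = k from by omega] at h2
      rw [show k+m+1-(m+1) = k from by omega] at h3
      rw [← h2, ← h3] at h1
      simpa [Nat.succ_eq_add_one, mul_comm] using h1.symm
    have hCsq : ((m:ℝ)+1)^2 * C'^2 = (S+1)^2 * C^2 := by
      have := congrArg (fun x : ℕ => (x:ℝ)) hCid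
      push_cast at this
      rw [hS, hC, hC']
      linear_combination (((m:ℝ)+1)*(((k+m+1).choose k : ℕ):ℝ) + ((k:ℝ)+(m:ℝ)+1)*(((k+m).choose k : ℕ):ℝ)) * this
    -- IH and mono
    have hmono := mono m (k+m) hm (by omega)
    have hSc : ((k+m:ℕ):ℝ) = S := by push_cast [hS]; ring
    rw [hSc] at ih
    have hmono' : (m:ℝ)^(2*m+1) * (S+1)^(2*(k+m)+1)
        ≤ ((m:ℝ)+1)^(2*m+1) * S^(2*(k+m)+1) := by
      have hc2 : ((k+m:ℕ):ℝ) = S := hSc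
      calc (m:ℝ)^(2*m+1) * (S+1)^(2*(k+m)+1)
          = (m:ℝ)^(2*m+1) * (((k+m:ℕ):ℝ)+1)^(2*(k+m)+1) := by rw [hc2]
        _ ≤ ((m:ℝ)+1)^(2*m+1) * ((k+m:ℕ):ℝ)^(2*(k+m)+1) := hmono
        _ = ((m:ℝ)+1)^(2*m+1) * S^(2*(k+m)+1) := by rw [hc2]
    -- main goal
    rw [show k+(m+1) = (k+m)+1 from by omega]
    push_cast
    rw [show ((k:ℝ)+(m:ℝ)+1) = S+1 from by rw [hS]]
    rw [show 2*((k+m)+1)+1 = (2*(k+m)+1)+2 from by omega]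
    rw [show 2*(m+1) = (2*m+1)+1 from by omega]
    set e : ℕ := 2*(k+m)+1 with he
    -- suffices multiplied form
    have hpos : (0:ℝ) < ((m:ℝ)+1)^2 * (m:ℝ)^(2*m+1) := by positivity
    rw [← mul_le_mul_iff_left₀ hpos]
    calc (S+1)^(e+2) * (((m:ℝ)+1)^2 * (m:ℝ)^(2*m+1))
        = (S+1)^2 * ((m:ℝ)+1)^2 * ((m:ℝ)^(2*m+1) * (S+1)^e) := by
          rw [pow_add]; ring
      _ ≤ (S+1)^2 * ((m:ℝ)+1)^2 * (((m:ℝ)+1)^(2*m+1) * S^e) := by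
          apply mul_le_mul_of_nonneg_left hmono' (by positivity)
      _ = (S+1)^2 * ((m:ℝ)+1)^(2*m+3) * S^e := by
          rw [show 2*m+3 = 2+(2*m+1) from by omega, pow_add]; ring
      _ ≤ (S+1)^2 * ((m:ℝ)+1)^(2*m+3) * (8*(k:ℝ)*(m:ℝ)*C^2*(k:ℝ)^(2*k)*(m:ℝ)^(2*m)) := by
          apply mul_le_mul_of_nonneg_left ih (by positivity)
      _ = 8*(k:ℝ)*((m:ℝ)+1)*C'^2*(k:ℝ)^(2*k)*((m:ℝ)+1)^((2*m+1)+1) * (((m:ℝ)+1)^2 * (m:ℝ)^(2*m+1)) := by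
          rw [show (2*m+1)+1 = 2*m+2 from rfl]
          linear_combination (-(8:ℝ)*(k:ℝ)*(k:ℝ)^(2*k)*(m:ℝ)^(2*m+1)*((m:ℝ)+1)^(2*m+3)) * hCsq

noncomputable def klBern (θ θt : ℝ) : ℝ :=
  θ * Real.log (θ / θt) + (1 - θ) * Real.log ((1 - θ) / (1 - θt))

theorem binomial_lower_bound (θ₀ : ℝ) (hθ₀ : θ₀ ∈ Set.Ioo (0:ℝ) 1)
    (n k : ℕ) (hn : 2 ≤ n) (hk : 1 ≤ k) (hk' : k ≤ n - 1) :
    (n.choose k : ℝ) * θ₀ ^ k * (1 - θ₀) ^ (n - k) ≥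
      (1 / Real.sqrt (8 * ((k:ℝ)/n) * (1 - (k:ℝ)/n) * n)) *
        Real.exp (-(n:ℝ) * klBern ((k:ℝ)/n) θ₀) := by
  obtain ⟨hθa, hθb⟩ := hθ₀
  obtain ⟨m, rfl⟩ : ∃ m, n = k + m := ⟨n - k, by omega⟩
  have hm1 : 1 ≤ m := by omega
  rw [show k + m - k = m from by omega]
  have hK0 : (0:ℝ) < (k:ℝ) := by exact_mod_cast hk
  have hM0 : (0:ℝ) < (m:ℝ) := by exact_mod_cast hm1
  set N : ℝ := ((k+m:ℕ):ℝ) with hN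
  have hNkm : N = (k:ℝ)+(m:ℝ) := by rw [hN]; push_cast; ring
  have hN0 : (0:ℝ) < N := by rw [hNkm]; linarith
  set α : ℝ := (k:ℝ)/N with hα
  have hα0 : (0:ℝ) < α := div_pos hK0 hN0
  have hα1 : α < 1 := (div_lt_one hN0).mpr (by rw [hNkm]; linarith)
  have h1α0 : (0:ℝ) < 1 - α := by linarith
  have h1θ0 : (0:ℝ) < 1 - θ₀ := by linarith
  have hNα : N * α = (k:ℝ) := by rw [hα]; field_simp
  have hNα' : N * (1-α) = (m:ℝ) := by
    have : 1 - α = (m:ℝ)/N := by rw [hα, hNkm]; field_simp; ring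
    rw [this]; field_simp
  set C : ℝ := (((k+m).choose k : ℕ):ℝ) with hC
  have hC1 : (1:ℝ) ≤ C := by
    rw [hC]; exact_mod_cast Nat.choose_pos (Nat.le_add_right k m)
  set E : ℝ := 8 * α * (1 - α) * N with hE
  have hE0 : (0:ℝ) < E := by rw [hE]; positivity
  have hsE0 : (0:ℝ) < Real.sqrt E := Real.sqrt_pos.mpr hE0
  -- rewrite the exponential
  have hexp : Real.exp (-N * klBern α θ₀) = (θ₀/α)^k * ((1-θ₀)/(1-α))^m := by
    have harg : -N * klBern α θ₀
        = (k:ℝ) * Real.log (θ₀/α) + (m:ℝ) * Real.log ((1-θ₀)/(1-α)) := by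
      rw [klBern, Real.log_div hα0.ne' hθa.ne', Real.log_div h1α0.ne' h1θ0.ne',
        Real.log_div hθa.ne' hα0.ne', Real.log_div h1θ0.ne' h1α0.ne']
      linear_combination (Real.log θ₀ - Real.log α) * hNα
        + (Real.log (1-θ₀) - Real.log (1-α)) * hNα'
    rw [harg, Real.exp_add, Real.exp_nat_mul, Real.exp_nat_mul,
      Real.exp_log (by positivity), Real.exp_log (by positivity)]
  -- key inequality
  have hkey : 1 ≤ C * (α^k * (1-α)^m * Real.sqrt E) := by
    have hQ := Qlem k m hk hm1
    rw [← hC, ← hN] at hQ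
    have hXsq : (C * (α^k * (1-α)^m * Real.sqrt E))^2
        = (8*(k:ℝ)*(m:ℝ)*C^2*(k:ℝ)^(2*k)*(m:ℝ)^(2*m)) / N^(2*(k+m)+1) := by
      have h1 : (Real.sqrt E)^2 = E := Real.sq_sqrt hE0.le
      have h2 : 1 - α = (m:ℝ)/N := by rw [hα, hNkm]; field_simp; ring
      rw [mul_pow, mul_pow, mul_pow, h1, hE, hα, h2]
      rw [div_pow, div_pow]
      field_simp
      have hNinv : N^(m*2) * N⁻¹^(m*2) = 1 := by rw [← mul_pow, mul_inv_cancel₀ hN0.ne', one_pow]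
      linear_combination ((k:ℝ)^(k*2)*(m:ℝ)^(m*2)*N*N^(k*2)) * hNinv
    have hX0 : (0:ℝ) ≤ C * (α^k * (1-α)^m * Real.sqrt E) := by positivity
    have hXsq1 : 1 ≤ (C * (α^k * (1-α)^m * Real.sqrt E))^2 := by
      rw [hXsq, le_div_iff₀ (by positivity)]
      linarith [hQ]
    nlinarith [hXsq1, hX0]
  -- conclude
  rw [ge_iff_le, hexp]
  have hD0 : (0:ℝ) < α^k * (1-α)^m * Real.sqrt E := by positivity
  calc 1 / Real.sqrt E * ((θ₀/α)^k * ((1-θ₀)/(1-α))^m)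
      = (θ₀^k * (1-θ₀)^m) * (1 / (α^k * (1-α)^m * Real.sqrt E)) := by
        simp only [div_pow]
        ring
    _ ≤ (θ₀^k * (1-θ₀)^m) * C := by
        apply mul_le_mul_of_nonneg_left _ (by positivity)
        rw [div_le_iff₀ hD0]
        linarith [hkey]
    _ = C * θ₀^k * (1-θ₀)^m := by ring
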